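/- Let 1<p<∞, -n < ϱ < -n/p, and α > n/p'. Then the weighted Lebesgue space L_p(ℝ^n, w_α) embeds continuously into H^ϱ L_p(ℝ^n): there is C such that ‖f‖_{H^ϱ L_p(ℝ^n)} ≤ C ‖w_α f‖_{L_p(ℝ^n)} for all f with w_α f ∈ L_p(ℝ^n), where w_α(x) = (1+|x|²)^{α/2}. -/

import Mathlib

open MeasureTheory ENNReal

/-- Index set for the dyadic cubes `Q_{J,M}`. -/
abbrev DyadicIdx (n : ℕ) := ℤ × (Fin n → ℤ)

/-- The dyadic cube `Q_{J,M} = 2^{-J}(M + [-1,1]^n)`. -/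
def dyadicCube (n : ℕ) (i : DyadicIdx n) : Set (EuclideanSpace ℝ (Fin n)) :=
  {x | ∀ k, |(2 : ℝ) ^ i.1 * x k - i.2 k| ≤ 1}

/-- The Morrey norm of `L_p^r(ℝⁿ)`, in its dyadic-cube form. -/
noncomputable def morreyNormC (n : ℕ) (p r : ℝ)
    (g : EuclideanSpace ℝ (Fin n) → ℝ≥0∞) : ℝ≥0∞ :=
  ⨆ i : DyadicIdx n,
    ENNReal.ofReal ((2 : ℝ) ^ ((i.1 : ℝ) * ((n : ℝ) / p + r))) *
      (∫⁻ x in dyadicCube n i, g x ^ p) ^ (1 / p)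

/-- `(lam, a)` is an admissible representation of `h` as an element of the
predual Morrey space `H^ϱ L_p(ℝⁿ)`. -/
def IsHRep (n : ℕ) (p ϱ : ℝ) (h : EuclideanSpace ℝ (Fin n) → ℝ)
    (lam : DyadicIdx n → ℝ) (a : DyadicIdx n → EuclideanSpace ℝ (Fin n) → ℝ) : Prop :=
  (∀ i, tsupport (a i) ⊆ dyadicCube n i) ∧
  (∀ i, eLpNorm (a i) (ENNReal.ofReal p) volume
      ≤ ENNReal.ofReal ((2 : ℝ) ^ (-(i.1 : ℝ) * ((n : ℝ) / p + ϱ)))) ∧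
  Summable (fun i => |lam i|) ∧
  (∀ᵐ x ∂(volume : Measure (EuclideanSpace ℝ (Fin n))), h x = ∑' i, lam i * a i x)

/-- The norm of the predual Morrey space `H^ϱ L_p(ℝⁿ)` (`= ∞` if no representation exists). -/
noncomputable def HNorm (n : ℕ) (p ϱ : ℝ) (h : EuclideanSpace ℝ (Fin n) → ℝ) : ℝ≥0∞ :=
  sInf {s | ∃ lam a, IsHRep n p ϱ h lam a ∧ s = ENNReal.ofReal (∑' i, |lam i|)}


lemma summable_int_aux {t : ℝ} (ht : 1/2 < t) :
    Summable fun m : ℤ => ((1:ℝ) + (m:ℝ)^2) ^ (-t) := by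
  have ht0 : 0 < t := lt_trans (by norm_num) ht
  have hsn : Summable fun k : ℕ => ((k:ℝ)+1) ^ (-(2*t)) := by
    have := (Real.summable_nat_rpow (p := -(2*t))).2 (by linarith)
    have h2 := (summable_nat_add_iff (f := fun k : ℕ => ((k:ℝ)) ^ (-(2*t))) 1).2 this
    simpa [Nat.cast_add] using h2
  have hz : Summable fun m : ℤ => ((|m| : ℝ)+1) ^ (-(2*t)) := by
    refine Summable.of_nat_of_neg ?_ ?_ <;> simpa using hsn
  refine Summable.of_nonneg_of_le (fun m => Real.rpow_nonneg (by positivity) _)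
    (fun m => ?_) (hz.mul_left ((2:ℝ)^t))
  have hb : ((|m|:ℝ)+1)^2 ≤ 2 * (1 + (m:ℝ)^2) := by
    have h : (|m|:ℝ)^2 = (m:ℝ)^2 := by push_cast; exact sq_abs _
    nlinarith [sq_nonneg ((|m|:ℝ) - 1)]
  have hA : (0:ℝ) < 1 + (m:ℝ)^2 := by positivity
  have hB : (0:ℝ) < (|m|:ℝ)+1 := by positivity
  have h1 : ((|m|:ℝ)+1) ^ (2*t) ≤ (2:ℝ)^t * (1 + (m:ℝ)^2)^t := by
    have he : ((|m|:ℝ)+1) ^ (2*t) = (((|m|:ℝ)+1)^2) ^ t := by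
      rw [← Real.rpow_natCast ((|m|:ℝ)+1) 2, ← Real.rpow_mul hB.le]
      norm_num [mul_comm]
    rw [he, ← Real.mul_rpow (by norm_num) hA.le]
    exact Real.rpow_le_rpow (by positivity) hb ht0.le
  have hpos1 : (0:ℝ) < ((|m|:ℝ)+1) ^ (2*t) := Real.rpow_pos_of_pos hB _
  have hpos2 : (0:ℝ) < (1 + (m:ℝ)^2)^t := Real.rpow_pos_of_pos hA _
  have key : ((1 + (m:ℝ)^2)^t)⁻¹ ≤ (2:ℝ)^t * (((|m|:ℝ)+1) ^ (2*t))⁻¹ := by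
    rw [← div_eq_mul_inv, le_div_iff₀ hpos1, inv_mul_le_iff₀ hpos2]
    calc ((|m|:ℝ)+1) ^ (2*t) ≤ (2:ℝ)^t * (1 + (m:ℝ)^2)^t := h1
      _ = (1 + (m:ℝ)^2)^t * 2^t := mul_comm _ _

  calc ((1:ℝ) + (m:ℝ)^2) ^ (-t) = ((1 + (m:ℝ)^2)^t)⁻¹ := Real.rpow_neg hA.le _
    _ ≤ (2:ℝ)^t * (((|m|:ℝ)+1) ^ (2*t))⁻¹ := key
    _ = (2:ℝ)^t * ((|m|:ℝ)+1) ^ (-(2*t)) := by rw [Real.rpow_neg hB.le]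


lemma tsum_pi_prod (h : ℤ → ℝ≥0∞) : ∀ (n : ℕ),
    ∑' M : Fin n → ℤ, ∏ k, h (M k) = (∑' m : ℤ, h m) ^ n := by
  intro n
  induction n with
  | zero => rw [tsum_eq_single (fun _ => 0) (fun b hb => absurd (Subsingleton.elim b _) hb)]; simp
  | succ n ih =>
    rw [← (Fin.consEquiv (fun _ : Fin (n+1) => ℤ)).tsum_eq (fun M => ∏ k, h (M k))]
    have key : ∀ q : ℤ × (Fin n → ℤ),
        (∏ k, h ((Fin.consEquiv (fun _ : Fin (n+1) => ℤ)) q k)) = h q.1 * ∏ k, h (q.2 k) := by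
      intro q
      rw [Fin.prod_univ_succ]
      rfl
    simp_rw [key]
    rw [ENNReal.tsum_prod']
    simp_rw [ENNReal.tsum_mul_left]
    rw [ENNReal.tsum_mul_right, ih, pow_succ, mul_comm]

lemma key_T (n : ℕ) (hn : 0 < n) {s : ℝ} (hs : (n:ℝ)/2 < s) :
    ∑' M : Fin n → ℤ, ENNReal.ofReal ((1 + ∑ k, ((M k : ℝ))^2) ^ (-s)) ≠ ∞ := by
  have hs0 : 0 < s := lt_of_le_of_lt (by positivity) hs
  set t : ℝ := s / n with htdef
  have ht : 1/2 < t := by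
    rw [htdef, lt_div_iff₀ (by exact_mod_cast hn)]
    rw [div_lt_iff₀ (by norm_num)] at hs
    linarith
  have ht0 : 0 < t := lt_trans (by norm_num) ht
  -- pointwise bound
  have hpt : ∀ M : Fin n → ℤ, ENNReal.ofReal ((1 + ∑ k, ((M k : ℝ))^2) ^ (-s))
      ≤ ∏ k, ENNReal.ofReal (((1:ℝ) + ((M k : ℝ))^2) ^ (-t)) := by
    intro M
    set Q : ℝ := ∑ k, ((M k : ℝ))^2 with hQ
    have hQ0 : 0 ≤ Q := Finset.sum_nonneg fun _ _ => sq_nonneg _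
    have hP : ∀ k : Fin n, (0:ℝ) < 1 + ((M k : ℝ))^2 := fun k => by positivity
    have hprod_le : (∏ k, ((1:ℝ) + ((M k : ℝ))^2)) ≤ (1+Q)^n := by
      have hle : ∀ k ∈ Finset.univ, (1:ℝ) + ((M k : ℝ))^2 ≤ 1 + Q := by
        intro k _
        have : ((M k : ℝ))^2 ≤ Q := Finset.single_le_sum (fun i _ => sq_nonneg ((M i : ℝ))) (Finset.mem_univ k)
        linarith
      calc (∏ k, ((1:ℝ) + ((M k : ℝ))^2)) ≤ ∏ _k : Fin n, (1+Q) :=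
            Finset.prod_le_prod (fun k _ => (hP k).le) hle
        _ = (1+Q)^n := by rw [Finset.prod_const, Finset.card_univ, Fintype.card_fin]
    have hprodpos : (0:ℝ) < ∏ k, ((1:ℝ) + ((M k : ℝ))^2) := Finset.prod_pos fun k _ => hP k
    -- raise to t
    have h2 : (∏ k, ((1:ℝ) + ((M k : ℝ))^2)) ^ t ≤ (1+Q)^s := by
      calc (∏ k, ((1:ℝ) + ((M k : ℝ))^2)) ^ t ≤ ((1+Q)^(n:ℕ)) ^ t :=
            Real.rpow_le_rpow hprodpos.le hprod_le ht0.le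
        _ = (1+Q)^s := by
            rw [← Real.rpow_natCast (1+Q) n, ← Real.rpow_mul (by linarith)]
            congr 1
            rw [htdef]; field_simp [(Nat.cast_pos.2 hn).ne']
    -- real pointwise ineq
    have hreal : (1 + Q) ^ (-s) ≤ ∏ k, ((1:ℝ) + ((M k : ℝ))^2) ^ (-t) := by
      have hpr : (∏ k, ((1:ℝ) + ((M k : ℝ))^2) ^ (-t))
          = ((∏ k, ((1:ℝ) + ((M k : ℝ))^2)) ^ t)⁻¹ := by
        rw [Real.finset_prod_rpow _ _ (fun k _ => (hP k).le) (-t),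
          Real.rpow_neg hprodpos.le]
      rw [hpr, Real.rpow_neg (by linarith)]
      exact inv_anti₀ (Real.rpow_pos_of_pos hprodpos _) h2
    calc ENNReal.ofReal ((1 + Q) ^ (-s)) ≤ ENNReal.ofReal (∏ k, ((1:ℝ) + ((M k : ℝ))^2) ^ (-t)) :=
          ENNReal.ofReal_le_ofReal hreal
      _ = ∏ k, ENNReal.ofReal (((1:ℝ) + ((M k : ℝ))^2) ^ (-t)) := by
          rw [← ENNReal.ofReal_prod_of_nonneg]
          exact fun k _ => Real.rpow_nonneg (hP k).le _
  refine ne_top_of_le_ne_top ?_ (ENNReal.tsum_le_tsum hpt)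
  rw [tsum_pi_prod (fun m : ℤ => ENNReal.ofReal (((1:ℝ)+(m:ℝ)^2) ^ (-t))) n]
  apply ENNReal.pow_ne_top
  rw [← ENNReal.ofReal_tsum_of_nonneg (fun m => Real.rpow_nonneg (by positivity) _) (summable_int_aux ht)]
  exact ENNReal.ofReal_ne_top

set_option maxHeartbeats 3200000 in
/-- for `1 < p < ∞`, `-n < ϱ < -n/p` and `α > n/p'`, the weighted Lebesgue space
`L_p(ℝⁿ, w_α)` with `w_α(x) = (1+|x|²)^{α/2}` embeds continuously into `H^ϱ L_p(ℝⁿ)`. -/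
theorem weighted_Lp_embeds_predual_morrey (n : ℕ) (hn : 0 < n) (p p' ϱ α : ℝ)
    (hp : 1 < p) (hϱ1 : -(n : ℝ) < ϱ) (hϱ2 : ϱ < -(n : ℝ) / p)
    (hp' : 1 / p + 1 / p' = 1) (hα : (n : ℝ) / p' < α) :
    ∃ C : ℝ, 0 < C ∧ ∀ f : EuclideanSpace ℝ (Fin n) → ℝ,
      MemLp (fun x => (1 + ‖x‖ ^ 2) ^ (α / 2) * f x) (ENNReal.ofReal p) volume →
      HNorm n p ϱ f
        ≤ ENNReal.ofReal C *
            eLpNorm (fun x => (1 + ‖x‖ ^ 2) ^ (α / 2) * f x) (ENNReal.ofReal p) volume := by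
  -- scalars
  have hp0 : (0:ℝ) < p := lt_trans zero_lt_one hp
  have h1p : 1/p < 1 := (div_lt_one hp0).2 hp
  have h1p0 : 0 < 1/p := by positivity
  have hp'0 : (0:ℝ) < p' := one_div_pos.1 (by linarith)
  have hp'1 : (1:ℝ) < p' := by
    have h : 1/p' < 1 := by linarith
    rwa [div_lt_one hp'0] at h
  have hα0 : (0:ℝ) < α := lt_trans (div_pos (by exact_mod_cast hn) hp'0) hα
  have conj : Real.HolderConjugate p p' := ⟨by simpa [one_div] using hp', hp0, hp'0⟩
  set s : ℝ := α * p' / 2 with hsdef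
  have hsgt : (n:ℝ)/2 < s := by
    have : (n:ℝ) < α * p' := by
      rw [div_lt_iff₀ hp'0] at hα; linarith
    rw [hsdef]; linarith
  set C₁ : ℝ := ((2:ℝ) + 2*n) ^ (α/2) with hC₁def
  have hC₁ : 0 < C₁ := Real.rpow_pos_of_pos (by positivity) _
  set T : ℝ≥0∞ := ∑' M : Fin n → ℤ, ENNReal.ofReal ((1 + ∑ k, ((M k : ℝ))^2) ^ (-s)) with hTdef
  have hT : T ≠ ∞ := key_T n hn hsgt
  set K : ℝ≥0∞ := T ^ (1/p') with hKdef
  have hK : K ≠ ∞ := (ENNReal.rpow_lt_top_of_nonneg (by positivity) hT).ne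
  have hKt : 0 ≤ C₁ * K.toReal := mul_nonneg hC₁.le ENNReal.toReal_nonneg
  refine ⟨C₁ * K.toReal + 1, by linarith, ?_⟩
  intro f hf
  set pe : ℝ≥0∞ := ENNReal.ofReal p with hpedef
  have hpe0 : pe ≠ 0 := by simp [hpedef, ENNReal.ofReal_eq_zero]; linarith
  have hpet : pe ≠ ⊤ := ENNReal.ofReal_ne_top
  have hper : pe.toReal = p := ENNReal.toReal_ofReal hp0.le
  set w : EuclideanSpace ℝ (Fin n) → ℝ := fun x => (1 + ‖x‖^2) ^ (α/2) with hwdef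
  set g : EuclideanSpace ℝ (Fin n) → ℝ := fun x => (1 + ‖x‖^2) ^ (α/2) * f x with hgdef
  have hwpos : ∀ x, 0 < w x := fun x => Real.rpow_pos_of_pos (by positivity) _
  have hw1 : ∀ x, (1:ℝ) ≤ w x := fun x =>
    Real.one_le_rpow (by nlinarith [sq_nonneg ‖x‖]) (by positivity)
  have hgabs : ∀ x, |g x| = w x * |f x| := fun x => by
    rw [hgdef, abs_mul, abs_of_pos (hwpos x)]
  have hfg : ∀ x, ‖f x‖ ≤ ‖g x‖ := by
    intro x
    rw [Real.norm_eq_abs, Real.norm_eq_abs, hgabs x]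
    nlinarith [hw1 x, abs_nonneg (f x)]
  -- measurability of f
  have hwcont : Continuous w := by
    apply Continuous.rpow_const
    · exact continuous_const.add ((continuous_norm).pow 2)
    · intro x; right; positivity
  have hfm : AEStronglyMeasurable f volume := by
    have : f = fun x => (w x)⁻¹ * g x := by
      funext x
      rw [hgdef]
      field_simp [(hwpos x).ne']; rfl
    rw [this]
    exact (hwcont.measurable.inv.aestronglyMeasurable).mul hf.1
  -- the partition
  set S : (Fin n → ℤ) → Set (EuclideanSpace ℝ (Fin n)) :=
    fun M => {x | ∀ k, x k ∈ Set.Ico ((M k : ℝ)) ((M k : ℝ) + 1)} with hSdef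
  have hSmeas : ∀ M, MeasurableSet (S M) := by
    intro M
    have : S M = ⋂ k, (fun x : EuclideanSpace ℝ (Fin n) => x k) ⁻¹' (Set.Ico ((M k : ℝ)) ((M k : ℝ) + 1)) := by
      ext x; simp [hSdef]
    rw [this]
    exact MeasurableSet.iInter fun k => (by fun_prop : Measurable fun x : EuclideanSpace ℝ (Fin n) => x k) measurableSet_Ico
  have hmem : ∀ x : EuclideanSpace ℝ (Fin n), x ∈ S (fun k => ⌊x k⌋) :=
    fun x k => ⟨Int.floor_le _, by push_cast; exact Int.lt_floor_add_one _⟩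
  have huniq : ∀ (x : EuclideanSpace ℝ (Fin n)) M, x ∈ S M → M = fun k => ⌊x k⌋ := by
    intro x M hx
    funext k
    exact (Int.floor_eq_iff.2 ⟨(hx k).1, (hx k).2⟩).symm
  have hdisj : Pairwise (Function.onFun Disjoint S) := by
    intro M M' hne
    rw [Function.onFun, Set.disjoint_left]
    intro x hx hx'
    exact hne ((huniq x M hx).trans (huniq x M' hx').symm)
  have hunion : (⋃ M, S M) = Set.univ :=
    Set.eq_univ_of_forall fun x => Set.mem_iUnion.2 ⟨_, hmem x⟩
  -- key pointwise estimate on S M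
  have hnormsq : ∀ x : EuclideanSpace ℝ (Fin n), ‖x‖^2 = ∑ k, (x k)^2 := by
    intro x
    rw [EuclideanSpace.norm_eq, Real.sq_sqrt (by positivity)]
    congr 1; funext k; rw [Real.norm_eq_abs, sq_abs]
  have hQbound : ∀ (M : Fin n → ℤ) (x : EuclideanSpace ℝ (Fin n)), x ∈ S M →
      1 + ∑ k, ((M k : ℝ))^2 ≤ ((2:ℝ) + 2*n) * (1 + ‖x‖^2) := by
    intro M x hx
    have hsum : ∑ k, ((M k : ℝ))^2 ≤ ∑ k, (2 * (x k)^2 + 2) := by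
      apply Finset.sum_le_sum
      intro k _
      have h1 : (M k : ℝ) ≤ x k := (hx k).1
      have h2 : x k < (M k : ℝ) + 1 := (hx k).2
      nlinarith [sq_nonneg (x k - 1), sq_nonneg (x k + 1), sq_nonneg ((M k : ℝ) - x k)]
    have : ∑ k, (2 * (x k)^2 + 2) = 2 * ‖x‖^2 + 2*n := by
      rw [Finset.sum_add_distrib, ← Finset.mul_sum, ← hnormsq, Finset.sum_const,
        Finset.card_univ, Fintype.card_fin, nsmul_eq_mul]
      ring
    nlinarith [sq_nonneg ‖x‖, hsum, this]
  have hkey : ∀ (M : Fin n → ℤ) (x : EuclideanSpace ℝ (Fin n)), x ∈ S M →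
      |f x| ≤ (C₁ * (1 + ∑ k, ((M k : ℝ))^2) ^ (-(α/2))) * |g x| := by
    intro M x hx
    set Q : ℝ := ∑ k, ((M k : ℝ))^2 with hQdef
    have hQ0 : (0:ℝ) ≤ Q := Finset.sum_nonneg fun _ _ => sq_nonneg _
    have hA : (0:ℝ) < (1 + Q) ^ (α/2) := Real.rpow_pos_of_pos (by linarith) _
    have h1 : (1 + Q) ^ (α/2) ≤ C₁ * w x := by
      calc (1 + Q) ^ (α/2) ≤ (((2:ℝ) + 2*n) * (1 + ‖x‖^2)) ^ (α/2) :=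
            Real.rpow_le_rpow (by linarith) (hQbound M x hx) (by positivity)
        _ = C₁ * w x := Real.mul_rpow (by positivity) (by positivity)
    have h2 : |f x| * (1 + Q) ^ (α/2) ≤ C₁ * |g x| := by
      rw [hgabs x]
      calc |f x| * (1 + Q) ^ (α/2) ≤ |f x| * (C₁ * w x) := by
            apply mul_le_mul_of_nonneg_left h1 (abs_nonneg _)
        _ = C₁ * (w x * |f x|) := by ring
    rw [Real.rpow_neg (by linarith : (0:ℝ) ≤ 1 + Q)]
    calc |f x| = (|f x| * (1 + Q) ^ (α/2)) * ((1 + Q) ^ (α/2))⁻¹ := by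
          field_simp
      _ ≤ (C₁ * |g x|) * ((1 + Q) ^ (α/2))⁻¹ :=
          mul_le_mul_of_nonneg_right h2 (by positivity)
      _ = (C₁ * ((1 + Q) ^ (α/2))⁻¹) * |g x| := by ring
  -- L^p quantities
  set b : (Fin n → ℤ) → ℝ≥0∞ := fun M => eLpNorm ((S M).indicator f) pe volume with hbdef
  set d : (Fin n → ℤ) → ℝ≥0∞ := fun M => eLpNorm ((S M).indicator g) pe volume with hddef
  set e : (Fin n → ℤ) → ℝ≥0∞ :=
    fun M => ENNReal.ofReal ((1 + ∑ k, ((M k : ℝ))^2) ^ (-(α/2))) with hedef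
  have hb_le : ∀ M, b M ≤ eLpNorm g pe volume :=
    fun M => le_trans (eLpNorm_indicator_le f) (eLpNorm_mono hfg)
  have hb_fin : ∀ M, b M ≠ ∞ := fun M => ((hb_le M).trans_lt hf.2).ne
  -- b M ≤ (C₁ * e M) * d M
  have hbd : ∀ M, b M ≤ (ENNReal.ofReal C₁ * e M) * d M := by
    intro M
    set c : ℝ := C₁ * (1 + ∑ k, ((M k : ℝ))^2) ^ (-(α/2)) with hcdef
    have hc0 : 0 ≤ c := mul_nonneg hC₁.le (Real.rpow_nonneg (by positivity) _)
    have hmono : ∀ x, ‖(S M).indicator f x‖ ≤ ‖(c • (S M).indicator g) x‖ := by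
      intro x
      by_cases hx : x ∈ S M
      · have h1 : (S M).indicator f x = f x := Set.indicator_of_mem hx f
        have h2 : (c • (S M).indicator g) x = c * g x := by
          simp [Set.indicator_of_mem hx]
        rw [h1, h2, Real.norm_eq_abs, Real.norm_eq_abs, abs_mul, abs_of_nonneg hc0]
        exact hkey M x hx
      · have h1 : (S M).indicator f x = 0 := Set.indicator_of_notMem hx f
        have h2 : (c • (S M).indicator g) x = 0 := by
          simp [Set.indicator_of_notMem hx]
        rw [h1, h2]
    calc b M ≤ eLpNorm (c • (S M).indicator g) pe volume := eLpNorm_mono hmono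
      _ = (‖c‖₊ : ℝ≥0∞) * d M := eLpNorm_const_smul c _ pe volume
      _ = (ENNReal.ofReal C₁ * e M) * d M := by
          rw [show (‖c‖₊ : ℝ≥0∞) = ‖c‖ₑ from rfl, Real.enorm_eq_ofReal hc0, hcdef,
            ENNReal.ofReal_mul hC₁.le]
  -- Hölder over the counting measure
  have hholder : ∑' M, e M * d M
      ≤ (∑' M, (d M)^p)^(1/p) * (∑' M, (e M)^p')^(1/p') := by
    have := ENNReal.lintegral_mul_le_Lp_mul_Lq (Measure.count : Measure ((Fin n) → ℤ)) conj
      (measurable_of_countable d).aemeasurable (measurable_of_countable e).aemeasurable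
    simp only [Pi.mul_apply, lintegral_count] at this
    calc ∑' M, e M * d M = ∑' M, d M * e M := by simp_rw [mul_comm]
      _ ≤ _ := this
  -- the d-sum
  have hd : (∑' M, (d M)^p)^(1/p) = eLpNorm g pe volume := by
    have hrep : ∀ M, (d M)^p = ∫⁻ x in S M, (‖g x‖₊ : ℝ≥0∞) ^ p := by
      intro M
      rw [hddef]
      simp only
      rw [eLpNorm_indicator_eq_eLpNorm_restrict (hSmeas M),
        eLpNorm_eq_lintegral_rpow_enorm_toReal hpe0 hpet, hper,
        ← ENNReal.rpow_mul, one_div, inv_mul_cancel₀ hp0.ne', ENNReal.rpow_one]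
      rfl
    simp_rw [hrep]
    rw [← lintegral_iUnion hSmeas hdisj, hunion, setLIntegral_univ,
      eLpNorm_eq_lintegral_rpow_enorm_toReal hpe0 hpet, hper]
    rfl
  -- the e-sum
  have he : ∑' M, (e M)^p' = T := by
    rw [hTdef]
    congr 1
    funext M
    rw [hedef]
    simp only
    rw [ENNReal.ofReal_rpow_of_nonneg (Real.rpow_nonneg (by positivity) _) hp'0.le,
      ← Real.rpow_mul (by positivity : (0:ℝ) ≤ 1 + ∑ k, ((M k : ℝ))^2)]
    congr 1
    rw [hsdef]; ring
  -- combine the estimates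
  have hsum : ∑' M, b M ≤ (ENNReal.ofReal C₁ * K) * eLpNorm g pe volume := by
    calc ∑' M, b M ≤ ∑' M, (ENNReal.ofReal C₁ * e M) * d M := ENNReal.tsum_le_tsum hbd
      _ = ENNReal.ofReal C₁ * ∑' M, e M * d M := by
          simp_rw [mul_assoc]; rw [ENNReal.tsum_mul_left]
      _ ≤ ENNReal.ofReal C₁ * ((∑' M, (d M)^p)^(1/p) * (∑' M, (e M)^p')^(1/p')) :=
          mul_le_mul_right hholder _
      _ = (ENNReal.ofReal C₁ * K) * eLpNorm g pe volume := by
          rw [hd, he, ← hKdef]; ring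
  have hsum_fin : ∑' M, b M ≠ ∞ :=
    ne_top_of_le_ne_top
      (ENNReal.mul_ne_top (ENNReal.mul_ne_top ENNReal.ofReal_ne_top hK) hf.2.ne) hsum
  classical
  -- the representation
  set B : DyadicIdx n → ℝ≥0∞ := fun i => if i.1 = 0 then b i.2 else 0 with hBdef
  have hB_fin : ∀ i, B i ≠ ∞ := by
    intro i; rw [hBdef]; dsimp only; split
    · exact hb_fin _
    · simp
  have hBsum : ∑' i, B i = ∑' M, b M := by
    rw [ENNReal.tsum_prod', tsum_eq_single (0 : ℤ) ?_]
    · simp [hBdef]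
    · intro J hJ; simp [hBdef, hJ]
  set lam : DyadicIdx n → ℝ := fun i => (B i).toReal with hlamdef
  have habs : (fun i => |lam i|) = lam := funext fun i => abs_of_nonneg ENNReal.toReal_nonneg
  have hBfin' : ∑' i, B i ≠ ∞ := by rw [hBsum]; exact hsum_fin
  have hlam_summable : Summable fun i => |lam i| := by
    rw [habs]; exact ENNReal.summable_toReal hBfin'
  have hofReal : ENNReal.ofReal (∑' i, |lam i|) = ∑' i, B i := by
    rw [habs, hlamdef]
    rw [← ENNReal.tsum_toReal_eq hB_fin, ENNReal.ofReal_toReal hBfin']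
  set a : DyadicIdx n → EuclideanSpace ℝ (Fin n) → ℝ :=
    fun i => if i.1 = 0 ∧ b i.2 ≠ 0 then ((b i.2).toReal)⁻¹ • (S i.2).indicator f else 0
    with hadef
  -- support
  have hcube_closed : ∀ i : DyadicIdx n, IsClosed (dyadicCube n i) := by
    intro i
    have heq : dyadicCube n i
        = ⋂ k, (fun x : EuclideanSpace ℝ (Fin n) => |(2:ℝ)^i.1 * x k - i.2 k|) ⁻¹' Set.Iic 1 := by
      ext x; simp [dyadicCube, Set.mem_iInter]
    rw [heq]
    refine isClosed_iInter fun k => IsClosed.preimage ?_ isClosed_Iic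
    exact ((continuous_const.mul (by fun_prop : Continuous fun x : EuclideanSpace ℝ (Fin n) => x k)).sub continuous_const).abs
  have hScube : ∀ M : Fin n → ℤ, S M ⊆ dyadicCube n ((0:ℤ), M) := by
    intro M x hx k
    show |(2:ℝ)^(0:ℤ) * x k - ((M k : ℝ))| ≤ 1
    rw [zpow_zero, one_mul, abs_le]
    constructor <;> [linarith [(hx k).1]; linarith [(hx k).2]]
  have hsupp : ∀ i, tsupport (a i) ⊆ dyadicCube n i := by
    intro i
    rw [hadef]; dsimp only
    split
    case isTrue h =>
      obtain ⟨J, M⟩ := i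
      obtain ⟨hJ, -⟩ := h
      dsimp only at hJ ⊢
      subst hJ
      refine closure_minimal ?_ (hcube_closed ((0:ℤ), M))
      intro x hx
      by_contra hxn
      have hxn' : x ∉ S M := fun hxm => hxn (hScube M hxm)
      apply hx
      simp [Set.indicator_of_notMem hxn']
    case isFalse => simp [tsupport, Function.support_zero]
  -- norm bound
  have hnorm : ∀ i, eLpNorm (a i) pe volume
      ≤ ENNReal.ofReal ((2:ℝ) ^ (-(i.1:ℝ) * ((n:ℝ)/p + ϱ))) := by
    intro i
    rw [hadef]; dsimp only
    split
    case isTrue h =>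
      obtain ⟨hJ, hb0⟩ := h
      have htR : 0 < (b i.2).toReal := ENNReal.toReal_pos hb0 (hb_fin _)
      have hval : eLpNorm (((b i.2).toReal)⁻¹ • (S i.2).indicator f) pe volume = 1 := by
        rw [eLpNorm_const_smul, Real.enorm_eq_ofReal (by positivity),
          ENNReal.ofReal_inv_of_pos htR, ENNReal.ofReal_toReal (hb_fin _)]
        exact ENNReal.inv_mul_cancel hb0 (hb_fin _)
      rw [hval, hJ]
      simp
    case isFalse =>
      rw [eLpNorm_zero]
      exact zero_le
  -- a.e. identity
  have hzero : ∀ M, b M = 0 →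
      ∀ᵐ x ∂(volume : Measure (EuclideanSpace ℝ (Fin n))), (S M).indicator f x = 0 := by
    intro M hM
    have := (eLpNorm_eq_zero_iff (hfm.indicator (hSmeas M)) hpe0).1 hM
    filter_upwards [this] with x hx using hx
  have hae : ∀ᵐ x ∂(volume : Measure (EuclideanSpace ℝ (Fin n))),
      f x = ∑' i, lam i * a i x := by
    have hall : ∀ᵐ x ∂(volume : Measure (EuclideanSpace ℝ (Fin n))),
        ∀ M : Fin n → ℤ, b M = 0 → (S M).indicator f x = 0 := by
      rw [ae_all_iff]
      intro M
      by_cases hM : b M = 0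
      · filter_upwards [hzero M hM] with x hx _ using hx
      · filter_upwards with x hx
        exact absurd hx hM
    filter_upwards [hall] with x hx
    set M₀ : Fin n → ℤ := fun k => ⌊x k⌋ with hM₀
    have hx0 : x ∈ S M₀ := hmem x
    have hterm : ∀ i : DyadicIdx n, i ≠ ((0:ℤ), M₀) → lam i * a i x = 0 := by
      intro i hi
      obtain ⟨J, M⟩ := i
      by_cases hJ : J = 0
      · subst hJ
        have hMne : M ≠ M₀ := fun h => hi (by rw [h])
        have hxnot : x ∉ S M := fun hxM => hMne (huniq x M hxM)
        rw [hadef]; dsimp only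
        split
        · simp [Set.indicator_of_notMem hxnot]
        · simp
      · rw [hlamdef, hBdef]; dsimp only
        rw [if_neg hJ]
        simp
    rw [tsum_eq_single ((0:ℤ), M₀) hterm]
    rw [hadef, hlamdef, hBdef]; dsimp only
    rw [if_pos rfl]
    by_cases hb0 : b M₀ = 0
    · rw [if_neg (by simp [hb0])]
      have hfx : (S M₀).indicator f x = 0 := hx M₀ hb0
      rw [Set.indicator_of_mem hx0] at hfx
      simp [hb0, hfx]
    · rw [if_pos ⟨rfl, hb0⟩]
      have htR : (b M₀).toReal ≠ 0 := (ENNReal.toReal_pos hb0 (hb_fin _)).ne'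
      simp only [Pi.smul_apply, smul_eq_mul]
      rw [Set.indicator_of_mem hx0]
      field_simp
  -- conclude
  have hmemb : ENNReal.ofReal (∑' i, |lam i|) ∈
      {s | ∃ lam a, IsHRep n p ϱ f lam a ∧ s = ENNReal.ofReal (∑' i, |lam i|)} :=
    ⟨lam, a, ⟨hsupp, hnorm, hlam_summable, hae⟩, rfl⟩
  calc HNorm n p ϱ f ≤ ENNReal.ofReal (∑' i, |lam i|) := sInf_le hmemb
    _ = ∑' i, B i := hofReal
    _ = ∑' M, b M := hBsum
    _ ≤ (ENNReal.ofReal C₁ * K) * eLpNorm g pe volume := hsum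
    _ ≤ ENNReal.ofReal (C₁ * K.toReal + 1) * eLpNorm g pe volume := by
        apply mul_le_mul_left
        calc ENNReal.ofReal C₁ * K = ENNReal.ofReal C₁ * ENNReal.ofReal K.toReal := by
              rw [ENNReal.ofReal_toReal hK]
          _ = ENNReal.ofReal (C₁ * K.toReal) := (ENNReal.ofReal_mul hC₁.le).symm
          _ ≤ ENNReal.ofReal (C₁ * K.toReal + 1) := ENNReal.ofReal_le_ofReal (by linarith)
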